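/- The third-order RadauIIA method is A-stable: for every z ∈ ℂ with Re(z) ≤ 0 one has 1 − 2z/3 + z²/6 ≠ 0 and |(1 + z/3)/(1 − 2z/3 + z²/6)| ≤ 1. -/

import Mathlib

/-- The third-order RadauIIA method is A-stable. -/
theorem radauIIA_A_stable (z : ℂ) (hz : z.re ≤ 0) :
    1 - 2 * z / 3 + z ^ 2 / 6 ≠ 0 ∧
      ‖(1 + z / 3) / (1 - 2 * z / 3 + z ^ 2 / 6)‖ ≤ 1 := by
  set x := z.re with hx
  set y := z.im with hy
  have hden : (1 - 2 * z / 3 + z ^ 2 / 6) ≠ 0 := by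
    intro h
    have h6 : (6 : ℂ) - 4 * z + z ^ 2 = 0 := by linear_combination 6 * h
    have hre := congrArg Complex.re h6
    have him := congrArg Complex.im h6
    simp [pow_two, Complex.sub_re, Complex.sub_im, Complex.add_re, Complex.add_im,
      Complex.mul_re, Complex.mul_im, ← hx, ← hy] at hre him
    nlinarith [sq_nonneg y, sq_nonneg (x - 2), sq_nonneg x, hre, him, mul_self_nonneg y]
  refine ⟨hden, ?_⟩
  rw [norm_div, div_le_one (norm_pos_iff.mpr hden)]
  rw [Complex.norm_def, Complex.norm_def]
  apply Real.sqrt_le_sqrt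
  have h1 : Complex.normSq (1 + z / 3) =
      ((3 + x) ^ 2 + y ^ 2) / 9 := by
    simp [Complex.normSq_apply, Complex.add_re, Complex.add_im, Complex.div_re,
      Complex.div_im, Complex.normSq_apply, ← hx, ← hy]
    ring
  have h2 : Complex.normSq (1 - 2 * z / 3 + z ^ 2 / 6) =
      ((6 - 4 * x + x ^ 2 - y ^ 2) ^ 2 + (2 * x * y - 4 * y) ^ 2) / 36 := by
    simp [Complex.normSq_apply, pow_two, Complex.add_re, Complex.add_im, Complex.sub_re,
      Complex.sub_im, Complex.div_re, Complex.div_im, Complex.mul_re, Complex.mul_im,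
      Complex.normSq_apply, ← hx, ← hy]
    ring
  rw [h1, h2]
  nlinarith [sq_nonneg (x ^ 2 + y ^ 2), mul_nonneg (neg_nonneg.2 hz) (add_nonneg (sq_nonneg x) (sq_nonneg y)), sq_nonneg x, neg_nonneg.2 hz]
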